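/- Let N ≥ 3, ℓ > 0, let 2 ≤ m ≤ ⌊N/2⌋, and let ỹ_j = R(cos(2πj/N), sin(2πj/N)) with R = ℓ(2 sin(π/N))^{−1} be the regular N-gon with edge length ℓ in ℝ². Then for every j, (ỹ_j − ỹ_{j+m})/|ỹ_j − ỹ_{j+m}| + (ỹ_j − ỹ_{j−m})/|ỹ_j − ỹ_{j−m}| = (Υ_m/ℓ)·(2ỹ_j − ỹ_{j+1} − ỹ_{j−1}), where Υ_m = sin(πm/N)/sin(π/N). In particular, the regular polygon is a critical point of the total m-diagonal length under the equilaterality constraints, with all Lagrange multipliers equal to σ_m/(NΥ_m), σ_m = sin²(πm/N)/sin²(π/N). -/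

import Mathlib

open Real

/-- The regular `N`-gon with edge length `ℓ` in the plane:
`ỹ_j = R(cos(2πj/N), sin(2πj/N))` with `R = ℓ(2 sin(π/N))⁻¹`. -/
noncomputable def regularNGon (N : ℕ) (ℓ : ℝ) : ZMod N → EuclideanSpace ℝ (Fin 2) :=
  fun j => WithLp.toLp 2 ![ℓ / (2 * Real.sin (Real.pi / N)) * Real.cos (2 * Real.pi * j.val / N),
             ℓ / (2 * Real.sin (Real.pi / N)) * Real.sin (2 * Real.pi * j.val / N)]

lemma aux_norm (R θ δ : ℝ) (hR : 0 ≤ R) (hδ : 0 ≤ Real.sin (δ/2))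
    (x y : EuclideanSpace ℝ (Fin 2))
    (hx : x = ![R*Real.cos θ, R*Real.sin θ])
    (hy : y = ![R*Real.cos (θ+δ), R*Real.sin (θ+δ)]) :
    ‖x - y‖ = 2*R*Real.sin (δ/2) := by
  have h1 : Real.cos θ = Real.cos (θ+δ/2) * Real.cos (δ/2) + Real.sin (θ+δ/2) * Real.sin (δ/2) := by
    rw [← Real.cos_sub]; ring_nf
  have h2 : Real.sin θ = Real.sin (θ+δ/2) * Real.cos (δ/2) - Real.cos (θ+δ/2) * Real.sin (δ/2) := by
    rw [← Real.sin_sub]; ring_nf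
  have h3 : Real.cos (θ+δ) = Real.cos (θ+δ/2) * Real.cos (δ/2) - Real.sin (θ+δ/2) * Real.sin (δ/2) := by
    rw [← Real.cos_add]; ring_nf
  have h4 : Real.sin (θ+δ) = Real.sin (θ+δ/2) * Real.cos (δ/2) + Real.cos (θ+δ/2) * Real.sin (δ/2) := by
    rw [← Real.sin_add]; ring_nf
  rw [EuclideanSpace.norm_eq]
  simp only [Fin.sum_univ_two, PiLp.sub_apply, hx, hy, Matrix.cons_val_zero, Matrix.cons_val_one,
    Matrix.head_cons, Real.norm_eq_abs, sq_abs]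
  rw [h1, h2, h3, h4]
  rw [show (R*(Real.cos (θ+δ/2) * Real.cos (δ/2) + Real.sin (θ+δ/2) * Real.sin (δ/2)) - R*(Real.cos (θ+δ/2) * Real.cos (δ/2) - Real.sin (θ+δ/2) * Real.sin (δ/2)))^2 + (R*(Real.sin (θ+δ/2) * Real.cos (δ/2) - Real.cos (θ+δ/2) * Real.sin (δ/2)) - R*(Real.sin (θ+δ/2) * Real.cos (δ/2) + Real.cos (θ+δ/2) * Real.sin (δ/2)))^2 = (2*R*Real.sin (δ/2))^2 by nlinarith [Real.sin_sq_add_cos_sq (θ+δ/2)]]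
  exact Real.sqrt_sq (by positivity)

lemma regularNGon_eq (N : ℕ) [NeZero N] (ℓ : ℝ) (hN : (0:ℝ) < N) (a : ZMod N) (x : ℤ)
    (hx : (x : ZMod N) = a) (t : ℝ) (ht : t = 2*Real.pi*x/N) :
    regularNGon N ℓ a = ![ℓ / (2 * Real.sin (Real.pi / N)) * Real.cos t,
                          ℓ / (2 * Real.sin (Real.pi / N)) * Real.sin t] := by
  have hdvd : (N:ℤ) ∣ ((a.val : ℤ) - x) := by
    apply (ZMod.intCast_zmod_eq_zero_iff_dvd _ N).mp
    push_cast
    rw [ZMod.natCast_val, ZMod.cast_id, hx]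
    ring
  obtain ⟨k, hk⟩ := hdvd
  have hval : ((a.val : ℤ) : ℝ) = x + N * k := by
    have : (a.val : ℤ) = x + N * k := by omega
    exact_mod_cast congrArg (Int.cast : ℤ → ℝ) this
  have hang : 2*Real.pi*(a.val:ℝ)/N = t + k * (2*Real.pi) := by
    push_cast at hval
    rw [ht, hval]
    field_simp
  unfold regularNGon
  rw [hang, Real.cos_add_int_mul_two_pi, Real.sin_add_int_mul_two_pi]

set_option maxHeartbeats 2000000 in
/-- Criticality of the regular polygon: for `2 ≤ m ≤ ⌊N/2⌋` and every vertex `j`,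
`(ỹ_j − ỹ_{j+m})/|ỹ_j − ỹ_{j+m}| + (ỹ_j − ỹ_{j−m})/|ỹ_j − ỹ_{j−m}|
  = (Υ_m/ℓ)·(2ỹ_j − ỹ_{j+1} − ỹ_{j−1})` with `Υ_m = sin(πm/N)/sin(π/N)`.
Hence the regular polygon is a critical point of the total `m`-diagonal length under the
equilaterality constraints, with all Lagrange multipliers equal to
`σ_m/(NΥ_m)`, `σ_m = sin²(πm/N)/sin²(π/N)`. -/
theorem regularNGon_critical (N : ℕ) [NeZero N] (hN : 3 ≤ N) (ℓ : ℝ) (hℓ : 0 < ℓ)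
    (m : ℕ) (hm : 2 ≤ m) (hmN : m ≤ N / 2) (j : ZMod N) :
    ‖regularNGon N ℓ j - regularNGon N ℓ (j + (m : ZMod N))‖⁻¹ •
        (regularNGon N ℓ j - regularNGon N ℓ (j + (m : ZMod N))) +
      ‖regularNGon N ℓ j - regularNGon N ℓ (j - (m : ZMod N))‖⁻¹ •
        (regularNGon N ℓ j - regularNGon N ℓ (j - (m : ZMod N))) =
      (Real.sin (Real.pi * m / N) / Real.sin (Real.pi / N) / ℓ) •
        (2 • regularNGon N ℓ j - regularNGon N ℓ (j + 1) - regularNGon N ℓ (j - 1)) := by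
  have hN0 : (0:ℝ) < N := by positivity
  have hN1 : (1:ℝ) < N := by exact_mod_cast (by omega : 1 < N)
  have hmltN : (m:ℝ) < N := by exact_mod_cast (by omega : m < N)
  have hm0 : (0:ℝ) < m := by exact_mod_cast (by omega : 0 < m)
  have hsN : 0 < Real.sin (Real.pi / N) :=
    Real.sin_pos_of_pos_of_lt_pi (by positivity) (div_lt_self Real.pi_pos hN1)
  have hs : 0 < Real.sin (Real.pi * m / N) := by
    apply Real.sin_pos_of_pos_of_lt_pi (by positivity)
    rw [div_lt_iff₀ hN0]
    nlinarith [Real.pi_pos]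
  have hR : 0 < ℓ / (2 * Real.sin (Real.pi / N)) := by positivity
  have hjz : (((j.val : ℤ)) : ZMod N) = j := by
    push_cast; rw [ZMod.natCast_val, ZMod.cast_id]
  have hj : regularNGon N ℓ j = ![ℓ / (2 * Real.sin (Real.pi / N)) * Real.cos (2*Real.pi*(j.val:ℝ)/N),
      ℓ / (2 * Real.sin (Real.pi / N)) * Real.sin (2*Real.pi*(j.val:ℝ)/N)] :=
    regularNGon_eq N ℓ hN0 j (j.val : ℤ) hjz _ (by push_cast; ring)
  have h1 : regularNGon N ℓ (j + (m : ZMod N)) =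
      ![ℓ / (2 * Real.sin (Real.pi / N)) * Real.cos (2*Real.pi*(j.val:ℝ)/N + 2*Real.pi*m/N),
        ℓ / (2 * Real.sin (Real.pi / N)) * Real.sin (2*Real.pi*(j.val:ℝ)/N + 2*Real.pi*m/N)] :=
    regularNGon_eq N ℓ hN0 _ ((j.val : ℤ) + m)
      (by push_cast [ZMod.natCast_val, ZMod.cast_id]; try ring) _
      (by push_cast; field_simp)
  have h2 : regularNGon N ℓ (j - (m : ZMod N)) =
      ![ℓ / (2 * Real.sin (Real.pi / N)) * Real.cos (2*Real.pi*(j.val:ℝ)/N - 2*Real.pi*m/N),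
        ℓ / (2 * Real.sin (Real.pi / N)) * Real.sin (2*Real.pi*(j.val:ℝ)/N - 2*Real.pi*m/N)] :=
    regularNGon_eq N ℓ hN0 _ ((j.val : ℤ) - m)
      (by push_cast [ZMod.natCast_val, ZMod.cast_id]; try ring) _
      (by push_cast; field_simp)
  have h3 : regularNGon N ℓ (j + 1) =
      ![ℓ / (2 * Real.sin (Real.pi / N)) * Real.cos (2*Real.pi*(j.val:ℝ)/N + 2*Real.pi/N),
        ℓ / (2 * Real.sin (Real.pi / N)) * Real.sin (2*Real.pi*(j.val:ℝ)/N + 2*Real.pi/N)] :=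
    regularNGon_eq N ℓ hN0 _ ((j.val : ℤ) + 1)
      (by push_cast [ZMod.natCast_val, ZMod.cast_id]; try ring) _
      (by push_cast; field_simp)
  have h4 : regularNGon N ℓ (j - 1) =
      ![ℓ / (2 * Real.sin (Real.pi / N)) * Real.cos (2*Real.pi*(j.val:ℝ)/N - 2*Real.pi/N),
        ℓ / (2 * Real.sin (Real.pi / N)) * Real.sin (2*Real.pi*(j.val:ℝ)/N - 2*Real.pi/N)] :=
    regularNGon_eq N ℓ hN0 _ ((j.val : ℤ) - 1)
      (by push_cast [ZMod.natCast_val, ZMod.cast_id]; try ring) _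
      (by push_cast; field_simp)
  have hhalf : 0 ≤ Real.sin ((2*Real.pi*(m:ℝ)/N) / 2) := by
    rw [show (2*Real.pi*(m:ℝ)/N) / 2 = Real.pi*m/N by ring]; exact hs.le
  have hn1 : ‖regularNGon N ℓ j - regularNGon N ℓ (j + (m : ZMod N))‖ =
      2 * (ℓ / (2 * Real.sin (Real.pi / N))) * Real.sin (Real.pi*m/N) := by
    have := aux_norm (ℓ / (2 * Real.sin (Real.pi / N))) (2*Real.pi*(j.val:ℝ)/N)
      (2*Real.pi*(m:ℝ)/N) hR.le hhalf _ _ hj h1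
    rwa [show (2*Real.pi*(m:ℝ)/N) / 2 = Real.pi*m/N by ring] at this
  have hn2 : ‖regularNGon N ℓ j - regularNGon N ℓ (j - (m : ZMod N))‖ =
      2 * (ℓ / (2 * Real.sin (Real.pi / N))) * Real.sin (Real.pi*m/N) := by
    rw [norm_sub_rev]
    have := aux_norm (ℓ / (2 * Real.sin (Real.pi / N)))
      (2*Real.pi*(j.val:ℝ)/N - 2*Real.pi*m/N) (2*Real.pi*(m:ℝ)/N) hR.le hhalf _ _ h2
      (by rw [show 2*Real.pi*(j.val:ℝ)/N - 2*Real.pi*m/N + 2*Real.pi*(m:ℝ)/N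
                = 2*Real.pi*(j.val:ℝ)/N by ring]; try exact hj)
    rwa [show (2*Real.pi*(m:ℝ)/N) / 2 = Real.pi*m/N by ring] at this
  have hcosD : Real.cos (2*Real.pi*(m:ℝ)/N) = 1 - 2 * Real.sin (Real.pi*m/N) ^ 2 := by
    rw [show 2*Real.pi*(m:ℝ)/N = 2*(Real.pi*m/N) by ring, Real.cos_two_mul]
    nlinarith [Real.sin_sq_add_cos_sq (Real.pi*(m:ℝ)/N)]
  have hcosB : Real.cos (2*Real.pi/N) = 1 - 2 * Real.sin (Real.pi/N) ^ 2 := by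
    rw [show 2*Real.pi/(N:ℝ) = 2*(Real.pi/N) by ring, Real.cos_two_mul]
    nlinarith [Real.sin_sq_add_cos_sq (Real.pi/(N:ℝ))]
  rw [hn1, hn2, two_smul]
  ext i
  fin_cases i <;>
  · simp only [PiLp.add_apply, PiLp.sub_apply, PiLp.smul_apply, smul_eq_mul, hj, h1, h2, h3, h4,
      Fin.zero_eta, Fin.mk_one, Matrix.cons_val_zero, Matrix.cons_val_one, Matrix.head_cons,
      Real.cos_add, Real.cos_sub, Real.sin_add, Real.sin_sub, hcosD, hcosB]
    field_simp
    ring
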